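/- Let R be an LM-system and suppose f(s1,…,sm) rewrites in one step at the root by a rule l → r to g(t1,…,tn). Then f(s1',…,sm') also rewrites in one step by the same rule l → r to g(t1',…,tn'), where si', tj' are the R-normal forms of si, tj. -/

import Mathlib

/-! Basic first-order terms, positions, substitutions and rewriting. -/

inductive Term (F : Type) : Type
  | var : Nat → Term F
  | app : F → List (Term F) → Term F

namespace Term

def subst {F : Type} (σ : Nat → Term F) : Term F → Term F
  | var n => σ n
  | app f ts => app f (ts.attach.map fun ⟨t, _⟩ => t.subst σ)

def root {F : Type} : Term F → Option F
  | var _ => none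
  | app f _ => some f

def label {F : Type} : Term F → F ⊕ Nat
  | var n => Sum.inr n
  | app f _ => Sum.inl f

def IsVar {F : Type} : Term F → Prop
  | var _ => True
  | app _ _ => False

def varsL {F : Type} : Term F → List Nat
  | var n => [n]
  | app _ ts => (ts.attach.map fun ⟨t, _⟩ => t.varsL).flatten

end Term

abbrev Rule (F : Type) := Term F × Term F
abbrev TRS (F : Type) := Set (Rule F)

/-- `SubtermAt t p u` : the subterm of `t` at position `p` is `u`. -/
inductive SubtermAt {F : Type} : Term F → List Nat → Term F → Prop
  | here (t : Term F) : SubtermAt t [] t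
  | there {f : F} {ts : List (Term F)} {i : Nat} {u : Term F} {p : List Nat} {v : Term F} :
      ts[i]? = some u → SubtermAt u p v → SubtermAt (Term.app f ts) (i :: p) v

/-- `ReplaceAt t p v t'` : replacing the subterm of `t` at position `p` by `v` yields `t'`. -/
inductive ReplaceAt {F : Type} : Term F → List Nat → Term F → Term F → Prop
  | here (t u : Term F) : ReplaceAt t [] u u
  | there {f : F} {ts : List (Term F)} {i : Nat} {u : Term F} {p : List Nat} {v w : Term F} :
      ts[i]? = some u → ReplaceAt u p v w →
      ReplaceAt (Term.app f ts) (i :: p) v (Term.app f (ts.set i w))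

variable {F : Type}

/-- One rewrite step using the given rule (at some position, with some substitution). -/
def RuleStep (ρ : Rule F) (s t : Term F) : Prop :=
  ∃ (σ : Nat → Term F) (p : List Nat),
    SubtermAt s p (ρ.1.subst σ) ∧ ReplaceAt s p (ρ.2.subst σ) t

def OneStep (R : TRS F) (s t : Term F) : Prop := ∃ ρ ∈ R, RuleStep ρ s t

/-- A rewrite step at the root position. -/
def RootStep (R : TRS F) (s t : Term F) : Prop :=
  ∃ ρ ∈ R, ∃ σ : Nat → Term F, s = ρ.1.subst σ ∧ t = ρ.2.subst σ

def StarRW (R : TRS F) : Term F → Term F → Prop := Relation.ReflTransGen (OneStep R)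
def Plus (R : TRS F) : Term F → Term F → Prop := Relation.TransGen (OneStep R)
/-- Convertibility (the congruence / equational theory generated by `R`). -/
def Conv (R : TRS F) : Term F → Term F → Prop := Relation.EqvGen (OneStep R)
def Joinable (R : TRS F) (s t : Term F) : Prop := ∃ u, StarRW R s u ∧ StarRW R t u
def NormalForm (R : TRS F) (t : Term F) : Prop := ∀ u, ¬ OneStep R t u
/-- `t` is the `R`-normal form of `s`. -/
def NFof (R : TRS F) (s t : Term F) : Prop := StarRW R s t ∧ NormalForm R t
def Terminating (R : TRS F) : Prop := WellFounded (fun a b : Term F => OneStep R b a)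
def Confluent (R : TRS F) : Prop := ∀ s t u, StarRW R s t → StarRW R s u → Joinable R t u
def Convergent (R : TRS F) : Prop := Confluent R ∧ Terminating R

/-- every proper subterm is irreducible -/
def EpsIrreducible (R : TRS F) (t : Term F) : Prop :=
  ∀ p u, SubtermAt t p u → p ≠ [] → NormalForm R u

def InnermostRedex (R : TRS F) (t : Term F) : Prop :=
  EpsIrreducible R t ∧ ¬ NormalForm R t

/-- Forward-closed, via the one-step-to-normal-form characterization. -/
def FCclosed (R : TRS F) : Prop :=
  ∀ t, InnermostRedex R t → ∀ u, NFof R t u → OneStep R t u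

def Unifies (σ : Nat → Term F) (s t : Term F) : Prop := s.subst σ = t.subst σ

def IsMGU (σ : Nat → Term F) (s t : Term F) : Prop :=
  Unifies σ s t ∧ ∀ τ, Unifies τ s t → ∃ δ, ∀ x, τ x = (σ x).subst δ

def IsRenaming (ρ : Nat → Term F) : Prop :=
  ∃ f : Nat → Nat, Function.Injective f ∧ ∀ n, ρ n = Term.var (f n)

/-- Redundancy criterion for an oriented equation `e` whose right-hand side is
reachable from its left-hand side: some proper subterm of the lhs is reducible. -/
def Redundant (R : TRS F) (e : Rule F) : Prop :=
  ∃ p u, p ≠ ([] : List Nat) ∧ SubtermAt e.1 p u ∧ ¬ NormalForm R u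

/-- `R₁ ↝ R₂`: forward overlaps of rules of `R₂` (renamed apart) into
right-hand sides of rules of `R₁`, at non-variable positions, via an mgu. -/
def FStep (R₁ R₂ : TRS F) : TRS F :=
  { e | ∃ (l₁ r₁ l₂ r₂ : Term F) (ρ : Nat → Term F) (p : List Nat) (u : Term F)
          (σ : Nat → Term F) (r₁' : Term F),
      (l₁, r₁) ∈ R₁ ∧ (l₂, r₂) ∈ R₂ ∧ IsRenaming ρ ∧
      SubtermAt r₁ p u ∧ ¬ u.IsVar ∧ IsMGU σ u (l₂.subst ρ) ∧
      ReplaceAt r₁ p (r₂.subst ρ) r₁' ∧ e = (l₁.subst σ, r₁'.subst σ) }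

def FCiter (R : TRS F) : Nat → TRS F
  | 0 => R
  | k + 1 => FCiter R k ∪ { e | e ∈ FStep (FCiter R k) R ∧ ¬ Redundant (FCiter R k) e }

def FCinf (R : TRS F) : TRS F := ⋃ k, FCiter R k

/-- Forward-closed, via the forward-closure construction: `FC(R) = R`. -/
def ForwardClosedFC (R : TRS F) : Prop := FCinf R = R

/-- `RHS(R)`: `R` together with the conclusions of right-hand-side critical
pair inferences (second rule renamed apart). -/
def RHSset (R : TRS F) : TRS F :=
  R ∪ { e | ∃ (s t u₀ v₀ : Term F) (ρ σ : Nat → Term F), (s, t) ∈ R ∧ (u₀, v₀) ∈ R ∧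
        IsRenaming ρ ∧ IsMGU σ t (v₀.subst ρ) ∧
        s.subst σ ≠ (u₀.subst ρ).subst σ ∧ e = (s.subst σ, (u₀.subst ρ).subst σ) }

/-- the (unordered) pairs of root symbols of two equations coincide -/
def RootPairSimilar (e₁ e₂ : Rule F) : Prop :=
  (e₁.1.root = e₂.1.root ∧ e₁.2.root = e₂.2.root) ∨
  (e₁.1.root = e₂.2.root ∧ e₁.2.root = e₂.1.root)

def QuasiDet (E : TRS F) : Prop :=
  (∀ e ∈ E, ¬ e.1.IsVar ∧ ¬ e.2.IsVar) ∧
  (∀ e ∈ E, e.1.root ≠ e.2.root) ∧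
  (∀ e₁ ∈ E, ∀ e₂ ∈ E, e₁ ≠ e₂ → ¬ RootPairSimilar e₁ e₂)

def HasRootPairRepetition (E : TRS F) : Prop :=
  ∃ e₁ ∈ E, ∃ e₂ ∈ E, e₁ ≠ e₂ ∧ RootPairSimilar e₁ e₂

def VarPreserving (R : TRS F) : Prop :=
  ∀ e ∈ R, ∀ n, n ∈ Term.varsL e.1 ↔ n ∈ Term.varsL e.2

def RightReduced (R : TRS F) : Prop := ∀ e ∈ R, NormalForm R e.2

def AlmostLeftReduced (R : TRS F) : Prop :=
  ¬ ∃ (l₁ r₁ l₂ r₂ : Term F) (p : List Nat) (u : Term F) (σ : Nat → Term F),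
      (l₁, r₁) ∈ R ∧ (l₂, r₂) ∈ R ∧ p ≠ [] ∧ SubtermAt l₁ p u ∧ u = l₂.subst σ

def NonSubtermCollapsing (R : TRS F) : Prop :=
  ¬ ∃ (t u : Term F) (p : List Nat), p ≠ [] ∧ SubtermAt u p t ∧ Conv R t u

structure LMSystem (R : TRS F) : Prop where
  convergent : Convergent R
  almostLeftReduced : AlmostLeftReduced R
  rightReduced : RightReduced R
  nonCollapsing : NonSubtermCollapsing R
  forwardClosed : FCclosed R
  quasiDet : QuasiDet (RHSset R)

/-- the symbol (function symbol or variable) of a term at a position, if defined -/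
def labelAt {F : Type} : List Nat → Term F → Option (F ⊕ Nat)
  | [], t => some t.label
  | i :: p, Term.app _ ts => (ts[i]?).bind (labelAt p)
  | _ :: _, Term.var _ => none

/-- outermost distinguishing position -/
def ODP (s t : Term F) (p : List Nat) : Prop :=
  (labelAt p s ≠ none ∨ labelAt p t ≠ none) ∧
  labelAt p s ≠ labelAt p t ∧
  ∀ q, q <+: p → q ≠ p → labelAt q s = labelAt q t



/-! ### Auxiliary lemmas -/

section Helpers
variable {F : Type}

namespace Term

@[simp] lemma subst_var' (σ : Nat → Term F) (n : Nat) : (var n).subst σ = σ n := by rw [subst]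

@[simp] lemma subst_app' (σ : Nat → Term F) (f : F) (ts : List (Term F)) :
    (app f ts).subst σ = app f (ts.map (·.subst σ)) := by
  rw [subst]; congr 1; rw [List.attach_map_val]

@[simp] lemma varsL_var' (n : Nat) : (var n : Term F).varsL = [n] := by rw [varsL]

lemma varsL_app' (f : F) (ts : List (Term F)) :
    (app f ts).varsL = (ts.map varsL).flatten := by
  rw [varsL]; congr 1; rw [List.attach_map_val]

lemma mem_varsL_app {n : Nat} {f : F} {ts : List (Term F)} :
    n ∈ (app f ts).varsL ↔ ∃ u ∈ ts, n ∈ u.varsL := by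
  simp [varsL_app', List.mem_flatten]

/-- size of a term -/
def tsize : Term F → Nat
  | var _ => 1
  | app _ ts => 1 + (ts.attach.map fun ⟨t, _⟩ => t.tsize).sum

@[simp] lemma tsize_var (n : Nat) : (var n : Term F).tsize = 1 := by rw [tsize]

lemma tsize_app (f : F) (ts : List (Term F)) :
    (app f ts).tsize = 1 + (ts.map tsize).sum := by
  rw [tsize]; congr 1; rw [List.attach_map_val]

lemma tsize_lt_of_mem {t : Term F} {ts : List (Term F)} (h : t ∈ ts) (f : F) :
    t.tsize < (app f ts).tsize := by
  rw [tsize_app]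
  have : t.tsize ∈ ts.map tsize := List.mem_map_of_mem h
  have := List.single_le_sum (l := ts.map tsize) (fun _ _ => Nat.zero_le _) _ this
  omega

lemma term_ind {P : Term F → Prop} (hv : ∀ n, P (var n))
    (ha : ∀ (f : F) (ts : List (Term F)), (∀ t ∈ ts, P t) → P (app f ts)) :
    ∀ t, P t := by
  have key : ∀ (n : Nat) (t : Term F), t.tsize ≤ n → P t := by
    intro n
    induction n with
    | zero => intro t ht; cases t <;> simp [tsize_app] at ht
    | succ n ih =>
      intro t ht
      cases t with
      | var m => exact hv m
      | app f ts =>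
        exact ha f ts fun u hu => ih u (by have := tsize_lt_of_mem hu f; omega)
  exact fun t => key t.tsize t le_rfl

lemma subst_subst (σ δ : Nat → Term F) (t : Term F) :
    (t.subst σ).subst δ = t.subst (fun n => (σ n).subst δ) := by
  induction t using term_ind with
  | hv n => simp
  | ha f ts ih =>
    simp only [subst_app', List.map_map]
    congr 1
    exact List.map_congr_left fun u hu => ih u hu

lemma subst_congr_vars {σ σ' : Nat → Term F} {t : Term F}
    (h : ∀ n ∈ t.varsL, σ n = σ' n) : t.subst σ = t.subst σ' := by
  induction t using term_ind with
  | hv n => simpa using h n (by simp)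
  | ha f ts ih =>
    simp only [subst_app']
    congr 1
    exact List.map_congr_left fun u hu => ih u hu fun n hn =>
      h n (mem_varsL_app.2 ⟨u, hu, hn⟩)

lemma subst_var_id (t : Term F) : t.subst var = t := by
  induction t using term_ind with
  | hv n => simp
  | ha f ts ih =>
    rw [subst_app']
    congr 1
    conv_rhs => rw [← List.map_id ts]
    exact List.map_congr_left fun u hu => ih u hu

lemma mem_varsL_subst {m : Nat} {σ : Nat → Term F} {t : Term F} :
    m ∈ (t.subst σ).varsL ↔ ∃ n ∈ t.varsL, m ∈ (σ n).varsL := by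
  induction t using term_ind with
  | hv n => simp
  | ha f ts ih =>
    simp only [subst_app', mem_varsL_app, List.mem_map]
    constructor
    · rintro ⟨v, ⟨u, hu, rfl⟩, hm⟩
      obtain ⟨n, hn, hmn⟩ := (ih u hu).1 hm
      exact ⟨n, ⟨u, hu, hn⟩, hmn⟩
    · rintro ⟨n, hn, hmn⟩
      obtain ⟨u, hu, hn⟩ := hn
      exact ⟨u.subst σ, ⟨u, hu, rfl⟩, (ih u hu).2 ⟨n, hn, hmn⟩⟩

lemma tsize_subst_le {n : Nat} {t : Term F} (h : n ∈ t.varsL) (σ : Nat → Term F) :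
    (σ n).tsize ≤ (t.subst σ).tsize := by
  induction t using term_ind with
  | hv m => simp at h; subst h; simp
  | ha f ts ih =>
    obtain ⟨u, hu, hn⟩ := mem_varsL_app.1 h
    have h1 := ih u hu hn
    have h2 := tsize_lt_of_mem (t := u.subst σ) (ts := ts.map (·.subst σ))
      (List.mem_map_of_mem hu) f
    rw [← subst_app'] at h2
    omega

lemma tsize_subst_lt {n : Nat} {f : F} {ts : List (Term F)}
    (h : n ∈ (Term.app f ts).varsL) (σ : Nat → Term F) :
    (σ n).tsize < ((Term.app f ts).subst σ).tsize := by
  obtain ⟨u, hu, hn⟩ := mem_varsL_app.1 h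
  have h1 := tsize_subst_le hn σ
  have h2 := tsize_lt_of_mem (t := u.subst σ) (ts := ts.map (·.subst σ))
    (List.mem_map_of_mem hu) f
  rw [← subst_app'] at h2
  omega

end Term

end Helpers

section Unification
variable {F : Type}

/-- simultaneous unification of a list of pairs -/
def UL (θ : Nat → Term F) (E : List (Term F × Term F)) : Prop :=
  ∀ p ∈ E, p.1.subst θ = p.2.subst θ

def evars (E : List (Term F × Term F)) : List Nat :=
  (E.map fun p => p.1.varsL ++ p.2.varsL).flatten

def esize (E : List (Term F × Term F)) : Nat :=
  (E.map fun p => p.1.tsize + p.2.tsize).sum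

def badc (E : List (Term F × Term F)) : Nat :=
  E.countP fun p => match p with | (.app _ _, .var _) => true | _ => false

@[simp] lemma evars_nil : evars ([] : List (Term F × Term F)) = [] := rfl
@[simp] lemma evars_cons (p : Term F × Term F) (E : List (Term F × Term F)) :
    evars (p :: E) = (p.1.varsL ++ p.2.varsL) ++ evars E := rfl
@[simp] lemma evars_append (E₁ E₂ : List (Term F × Term F)) :
    evars (E₁ ++ E₂) = evars E₁ ++ evars E₂ := by
  simp [evars]
@[simp] lemma esize_nil : esize ([] : List (Term F × Term F)) = 0 := rfl
@[simp] lemma esize_cons (p : Term F × Term F) (E : List (Term F × Term F)) :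
    esize (p :: E) = p.1.tsize + p.2.tsize + esize E := by
  simp [esize]
@[simp] lemma esize_append (E₁ E₂ : List (Term F × Term F)) :
    esize (E₁ ++ E₂) = esize E₁ + esize E₂ := by
  simp [esize]

lemma map_eq_forall_zip {α β γ : Type*} {h1 : α → γ} {h2 : β → γ} :
    ∀ {l1 : List α} {l2 : List β}, l1.map h1 = l2.map h2 →
      ∀ p ∈ l1.zip l2, h1 p.1 = h2 p.2 := by
  intro l1
  induction l1 with
  | nil => intro l2 _ p hp; simp at hp
  | cons a l1 ih =>
    intro l2 h p hp
    cases l2 with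
    | nil => simp at h
    | cons b l2 =>
      simp only [List.map_cons, List.cons.injEq] at h
      rcases List.mem_cons.1 hp with rfl | hp
      · exact h.1
      · exact ih h.2 p hp

lemma zip_map_eq {α β γ : Type*} {h1 : α → γ} {h2 : β → γ} :
    ∀ {l1 : List α} {l2 : List β}, l1.length = l2.length →
      (∀ p ∈ l1.zip l2, h1 p.1 = h2 p.2) → l1.map h1 = l2.map h2 := by
  intro l1
  induction l1 with
  | nil => intro l2 h _; cases l2 with
    | nil => rfl
    | cons b l2 => simp at h
  | cons a l1 ih =>
    intro l2 hl h
    cases l2 with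
    | nil => simp at hl
    | cons b l2 =>
      simp only [List.map_cons]
      refine congrArg₂ _ (h _ (List.mem_cons_self)) ?_
      exact ih (by simpa using hl) fun p hp => h p (List.mem_cons_of_mem _ hp)

lemma sum_zip_le : ∀ (l1 l2 : List (Term F)),
    esize (l1.zip l2) ≤ (l1.map Term.tsize).sum + (l2.map Term.tsize).sum := by
  intro l1
  induction l1 with
  | nil => intro l2; simp [esize]
  | cons a l1 ih =>
    intro l2
    cases l2 with
    | nil => simp [esize]
    | cons b l2 =>
      have := ih l2
      simp only [List.zip_cons_cons, esize_cons, List.map_cons, List.sum_cons]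
      omega


lemma mem_evars {x : Nat} {E : List (Term F × Term F)} :
    x ∈ evars E ↔ ∃ p ∈ E, x ∈ p.1.varsL ∨ x ∈ p.2.varsL := by
  rw [evars, List.mem_flatten]
  constructor
  · rintro ⟨l, hl, hx⟩
    obtain ⟨p, hp, rfl⟩ := List.mem_map.1 hl
    exact ⟨p, hp, by simpa using hx⟩
  · rintro ⟨p, hp, hx⟩
    exact ⟨p.1.varsL ++ p.2.varsL, List.mem_map_of_mem hp, List.mem_append.2 hx⟩

lemma lex3_of_le_lt {a b c a' b' c' : Nat} (h1 : a ≤ a') (h2 : b < b') :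
    Prod.Lex (fun a₁ a₂ => a₁ < a₂) (Prod.Lex (fun a₁ a₂ => a₁ < a₂) fun a₁ a₂ => a₁ < a₂)
      (a, b, c) (a', b', c') := by
  rcases lt_or_eq_of_le h1 with h | rfl
  · exact Prod.Lex.left _ _ h
  · exact Prod.Lex.right _ (Prod.Lex.left _ _ h2)

lemma evars_elim_subset {n : Nat} {t₀ : Term F} (hnocc : n ∉ t₀.varsL)
    (E' : List (Term F × Term F)) :
    ∀ x ∈ evars (E'.map fun p => (p.1.subst (fun y => if y = n then t₀ else Term.var y),
        p.2.subst (fun y => if y = n then t₀ else Term.var y))),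
      (x ∈ t₀.varsL ∨ x ∈ evars E') ∧ x ≠ n := by
  intro x hx
  obtain ⟨p, hp, hx⟩ := mem_evars.1 hx
  simp only [List.mem_map] at hp
  obtain ⟨q, hq, rfl⟩ := hp
  have main : ∀ a : Term F,
      x ∈ (a.subst (fun y => if y = n then t₀ else Term.var y)).varsL →
      ((x ∈ t₀.varsL ∨ x ∈ a.varsL) ∧ x ≠ n) := by
    intro a ha
    obtain ⟨k, hk, hxk⟩ := Term.mem_varsL_subst.1 ha
    by_cases hkn : k = n
    · subst hkn
      rw [if_pos rfl] at hxk
      exact ⟨Or.inl hxk, fun hxn => hnocc (hxn ▸ hxk)⟩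
    · rw [if_neg hkn] at hxk
      simp at hxk
      subst hxk
      exact ⟨Or.inr hk, hkn⟩
  rcases hx with hx | hx
  · obtain ⟨h1, h2⟩ := main q.1 hx
    exact ⟨h1.imp id (fun h => mem_evars.2 ⟨q, hq, Or.inl h⟩), h2⟩
  · obtain ⟨h1, h2⟩ := main q.2 hx
    exact ⟨h1.imp id (fun h => mem_evars.2 ⟨q, hq, Or.inr h⟩), h2⟩

lemma badc_cons_var_left (n : Nat) (t : Term F) (E' : List (Term F × Term F)) :
    badc ((Term.var n, t) :: E') = badc E' := by
  rw [badc, badc, List.countP_cons_of_neg]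
  exact fun h => by simp at h

lemma badc_cons_app_var (f : F) (ss : List (Term F)) (n : Nat)
    (E' : List (Term F × Term F)) :
    badc ((Term.app f ss, Term.var n) :: E') = badc E' + 1 := by
  rw [badc, badc, List.countP_cons_of_pos]
  rfl

theorem unify_exists : ∀ (E : List (Term F × Term F)), (∃ θ, UL θ E) →
    ∃ σm : Nat → Term F, UL σm E ∧ ∀ τ, UL τ E → ∃ δ, ∀ x, τ x = (σm x).subst δ
  | [], _ => ⟨Term.var, fun p hp => by simp at hp, fun τ _ => ⟨τ, fun x => by simp⟩⟩
  | (Term.var n, t₀) :: E', h => by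
    obtain ⟨θ, hθ⟩ := h
    have hth : θ n = t₀.subst θ := by simpa using hθ _ (List.mem_cons_self)
    by_cases hv : t₀ = Term.var n
    · subst hv
      obtain ⟨σ, hσ, hm⟩ := unify_exists E' ⟨θ, fun p hp => hθ p (List.mem_cons_of_mem _ hp)⟩
      refine ⟨σ, ?_, fun τ hτ => hm τ (fun p hp => hτ p (List.mem_cons_of_mem _ hp))⟩
      intro p hp
      rcases List.mem_cons.1 hp with rfl | hp
      · rfl
      · exact hσ p hp
    · have hnocc : n ∉ t₀.varsL := by
        intro hmem
        cases t₀ with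
        | var m => simp at hmem; exact hv (by rw [hmem])
        | app f ts =>
          have h1 := Term.tsize_subst_lt hmem θ
          rw [← hth] at h1
          omega
      have key : ∀ (τ : Nat → Term F), τ n = t₀.subst τ →
          ∀ a : Term F, (a.subst (fun x => if x = n then t₀ else Term.var x)).subst τ
            = a.subst τ := by
        intro τ hτn a
        rw [Term.subst_subst]
        refine Term.subst_congr_vars fun x _ => ?_
        by_cases hx : x = n
        · subst hx; simp [hτn]
        · simp [hx]
      set σ₁ : Nat → Term F := fun x => if x = n then t₀ else Term.var x with hσ₁
      have hULθ : UL θ (E'.map fun p => (p.1.subst σ₁, p.2.subst σ₁)) := by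
        rintro p hp
        simp only [List.mem_map] at hp
        obtain ⟨q, hq, rfl⟩ := hp
        simp only
        rw [key θ hth, key θ hth]
        exact hθ q (List.mem_cons_of_mem _ hq)
      obtain ⟨σ₂, hσ₂, hm₂⟩ := unify_exists (E'.map fun p => (p.1.subst σ₁, p.2.subst σ₁))
        ⟨θ, hULθ⟩
      have ht₀σ₁ : t₀.subst σ₁ = t₀ := by
        rw [show t₀.subst σ₁ = t₀.subst Term.var from
          Term.subst_congr_vars fun x hx => by
            have : x ≠ n := fun hxn => hnocc (hxn ▸ hx)
            simp [hσ₁, this], Term.subst_var_id]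
      refine ⟨fun x => (σ₁ x).subst σ₂, ?_, ?_⟩
      · intro p hp
        rcases List.mem_cons.1 hp with rfl | hp
        · show (Term.var n).subst _ = t₀.subst _
          rw [Term.subst_var', ← Term.subst_subst, ht₀σ₁]
          simp [hσ₁]
        · rw [← Term.subst_subst, ← Term.subst_subst]
          exact hσ₂ _ (List.mem_map_of_mem hp)
      · intro τ hτ
        have hτn : τ n = t₀.subst τ := by simpa using hτ _ (List.mem_cons_self)
        have hULτ : UL τ (E'.map fun p => (p.1.subst σ₁, p.2.subst σ₁)) := by
          rintro p hp
          simp only [List.mem_map] at hp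
          obtain ⟨q, hq, rfl⟩ := hp
          simp only
          rw [key τ hτn, key τ hτn]
          exact hτ q (List.mem_cons_of_mem _ hq)
        obtain ⟨δ, hδ⟩ := hm₂ τ hULτ
        refine ⟨δ, fun x => ?_⟩
        have h1 : τ x = (σ₁ x).subst τ := by
          have := key τ hτn (Term.var x)
          rw [Term.subst_var', Term.subst_var'] at this
          exact this.symm
        rw [h1, show (σ₁ x).subst τ = (σ₁ x).subst (fun y => (σ₂ y).subst δ) from
          Term.subst_congr_vars fun y _ => hδ y, ← Term.subst_subst]
  | (Term.app f ss, Term.var n) :: E', h => by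
    obtain ⟨θ, hθ⟩ := h
    obtain ⟨σ, hσ, hm⟩ := unify_exists ((Term.var n, Term.app f ss) :: E') ⟨θ, by
      intro p hp
      rcases List.mem_cons.1 hp with rfl | hp
      · exact (hθ _ (List.mem_cons_self)).symm
      · exact hθ p (List.mem_cons_of_mem _ hp)⟩
    refine ⟨σ, ?_, ?_⟩
    · intro p hp
      rcases List.mem_cons.1 hp with rfl | hp
      · exact (hσ _ (List.mem_cons_self)).symm
      · exact hσ p (List.mem_cons_of_mem _ hp)
    · intro τ hτ
      refine hm τ ?_
      intro p hp
      rcases List.mem_cons.1 hp with rfl | hp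
      · exact (hτ _ (List.mem_cons_self)).symm
      · exact hτ p (List.mem_cons_of_mem _ hp)
  | (Term.app f ss, Term.app g ts) :: E', h => by
    obtain ⟨θ, hθ⟩ := h
    have hhead := hθ _ (List.mem_cons_self)
    simp only [Term.subst_app', Term.app.injEq] at hhead
    obtain ⟨rfl, hmaps⟩ := hhead
    have hlen : ss.length = ts.length := by
      have := congrArg List.length hmaps
      simpa using this
    have hULθ : UL θ (ss.zip ts ++ E') := by
      intro p hp
      rcases List.mem_append.1 hp with hp | hp
      · exact map_eq_forall_zip hmaps p hp
      · exact hθ p (List.mem_cons_of_mem _ hp)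
    obtain ⟨σ, hσ, hm⟩ := unify_exists (ss.zip ts ++ E') ⟨θ, hULθ⟩
    refine ⟨σ, ?_, ?_⟩
    · intro p hp
      rcases List.mem_cons.1 hp with rfl | hp
      · simp only [Term.subst_app', Term.app.injEq]
        exact ⟨trivial, zip_map_eq hlen fun p hp => hσ p (List.mem_append.2 (Or.inl hp))⟩
      · exact hσ p (List.mem_append.2 (Or.inr hp))
    · intro τ hτ
      refine hm τ ?_
      intro p hp
      rcases List.mem_append.1 hp with hp | hp
      · have := hτ _ (List.mem_cons_self)
        simp only [Term.subst_app', Term.app.injEq] at this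
        exact map_eq_forall_zip this.2 p hp
      · exact hτ p (List.mem_cons_of_mem _ hp)
  termination_by E => ((evars E).toFinset.card, esize E, badc E)
  decreasing_by
  all_goals simp_wf
  · refine lex3_of_le_lt (Finset.card_le_card fun x hx => ?_) (by omega)
    exact Finset.mem_insert_of_mem (Finset.mem_union_right _ hx)
  · apply Prod.Lex.left
    have hsub := evars_elim_subset hnocc E'
    refine lt_of_le_of_lt (Finset.card_le_card (fun x hx => ?_))
      (Finset.card_erase_lt_of_mem (Finset.mem_insert_self n _))
    rw [List.mem_toFinset] at hx
    obtain ⟨h1, h2⟩ := hsub x hx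
    refine Finset.mem_erase.2 ⟨h2, Finset.mem_insert_of_mem ?_⟩
    rcases h1 with h1 | h1
    · exact Finset.mem_union_left _ (List.mem_toFinset.2 h1)
    · exact Finset.mem_union_right _ (List.mem_toFinset.2 h1)
  · have he : (Term.app f ss).tsize + 1 + esize E' = 1 + (Term.app f ss).tsize + esize E' := by
      omega
    rw [he, badc_cons_var_left, badc_cons_app_var]
    exact Prod.Lex.right _ (Prod.Lex.right _ (Nat.lt_succ_self _))
  · refine lex3_of_le_lt (Finset.card_le_card fun x hx => ?_) ?_
    · rcases Finset.mem_union.1 hx with hx | hx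
      · rw [List.mem_toFinset] at hx
        obtain ⟨p, hp, hx⟩ := mem_evars.1 hx
        obtain ⟨hp1, hp2⟩ := List.of_mem_zip hp
        rcases hx with hx | hx
        · exact Finset.mem_union_left _ (List.mem_toFinset.2
            (Term.mem_varsL_app.2 ⟨p.1, hp1, hx⟩))
        · exact Finset.mem_union_right _ (Finset.mem_union_left _ (List.mem_toFinset.2
            (Term.mem_varsL_app.2 ⟨p.2, hp2, hx⟩)))
      · exact Finset.mem_union_right _ (Finset.mem_union_right _ hx)
    · have h1 := sum_zip_le ss ts
      have h2 : 0 < (Term.app f ss).tsize := by rw [Term.tsize_app]; omega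
      have h3 : 0 < (Term.app g ts).tsize := by rw [Term.tsize_app]; omega
      rw [Term.tsize_app, Term.tsize_app]
      omega

end Unification

section Rewriting
variable {F : Type} {R : TRS F}

lemma subtermAt_nil {t u : Term F} (h : SubtermAt t [] u) : t = u := by
  cases h; rfl

lemma replaceAt_nil {t v w : Term F} (h : ReplaceAt t [] v w) : w = v := by
  cases h; rfl

lemma subtermAt_cons {t v : Term F} {i : Nat} {q : List Nat}
    (h : SubtermAt t (i :: q) v) :
    ∃ (f : F) (ts : List (Term F)) (u : Term F),
      t = Term.app f ts ∧ ts[i]? = some u ∧ SubtermAt u q v := by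
  cases h with
  | there hget hsub => exact ⟨_, _, _, rfl, hget, hsub⟩

lemma subtermAt_trans {t u v : Term F} {p q : List Nat}
    (h1 : SubtermAt t p u) (h2 : SubtermAt u q v) : SubtermAt t (p ++ q) v := by
  induction h1 with
  | here => exact h2
  | there hget _ ih => exact .there hget (ih h2)

lemma replaceAt_lift {t u v w : Term F} {p q : List Nat}
    (h1 : SubtermAt t p u) (h2 : ReplaceAt u q v w) :
    ∃ t', ReplaceAt t (p ++ q) v t' := by
  induction h1 with
  | here => exact ⟨w, h2⟩
  | there hget _ ih =>
    obtain ⟨t', ht'⟩ := ih h2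
    exact ⟨_, .there hget ht'⟩

lemma replaceAt_exists {t u : Term F} {p : List Nat} (h : SubtermAt t p u)
    (v : Term F) : ∃ t', ReplaceAt t p v t' := by
  have := replaceAt_lift h (ReplaceAt.here u v)
  simpa using this

lemma oneStep_of_subterm {t u u' : Term F} {p : List Nat}
    (h : SubtermAt t p u) (hs : OneStep R u u') : ∃ t', OneStep R t t' := by
  obtain ⟨ρ, hρ, σ, q, hsu, hru⟩ := hs
  obtain ⟨t', ht'⟩ := replaceAt_lift h hru
  exact ⟨t', ρ, hρ, σ, p ++ q, subtermAt_trans h hsu, ht'⟩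

lemma normalForm_subterm {t u : Term F} {p : List Nat}
    (hnf : NormalForm R t) (h : SubtermAt t p u) : NormalForm R u := by
  intro u' hu'
  obtain ⟨t', ht'⟩ := oneStep_of_subterm h hu'
  exact hnf t' ht'

lemma get?_append_cons {α : Type*} : ∀ (pre : List α) (a : α) (suf : List α),
    (pre ++ a :: suf)[pre.length]? = some a := by
  intro pre
  induction pre with
  | nil => intro a suf; rfl
  | cons b pre ih => intro a suf; simpa using ih a suf

lemma set_append_cons {α : Type*} : ∀ (pre : List α) (a b : α) (suf : List α),
    (pre ++ a :: suf).set pre.length b = pre ++ b :: suf := by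
  intro pre
  induction pre with
  | nil => intro a b suf; rfl
  | cons c pre ih => intro a b suf; simp [ih a b suf]

lemma oneStep_congr {a b : Term F} (h : OneStep R a b) (f : F)
    (pre suf : List (Term F)) :
    OneStep R (.app f (pre ++ a :: suf)) (.app f (pre ++ b :: suf)) := by
  obtain ⟨ρ, hρ, σ, p, hsub, hrep⟩ := h
  refine ⟨ρ, hρ, σ, pre.length :: p, .there (get?_append_cons pre a suf) hsub, ?_⟩
  have := ReplaceAt.there (f := f) (get?_append_cons pre a suf) hrep
  rwa [set_append_cons] at this

lemma starRW_congr {a b : Term F} (h : StarRW R a b) (f : F)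
    (pre suf : List (Term F)) :
    StarRW R (.app f (pre ++ a :: suf)) (.app f (pre ++ b :: suf)) :=
  Relation.ReflTransGen.lift (fun x => Term.app f (pre ++ x :: suf))
    (fun _ _ hab => oneStep_congr hab f pre suf) _ _ h

lemma starRW_args_aux {ss ss' : List (Term F)} (h : List.Forall₂ (StarRW R) ss ss')
    (f : F) : ∀ pre : List (Term F),
    StarRW R (.app f (pre ++ ss)) (.app f (pre ++ ss')) := by
  induction h with
  | nil => exact fun _ => .refl
  | @cons a b l₁ l₂ hab _ ih =>
    intro pre
    refine .trans (starRW_congr hab f pre l₁) ?_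
    have := ih (pre ++ [b])
    simpa [StarRW] using this

lemma starRW_args {ss ss' : List (Term F)} (h : List.Forall₂ (StarRW R) ss ss')
    (f : F) : StarRW R (.app f ss) (.app f ss') := by
  have := starRW_args_aux h f []
  simpa using this

lemma forall₂_nfof_nf {xs ys : List (Term F)} (h : List.Forall₂ (NFof R) xs ys) :
    ∀ y ∈ ys, NormalForm R y := by
  induction h with
  | nil => simp
  | cons hab _ ih =>
    intro y hy
    rcases List.mem_cons.1 hy with rfl | hy
    · exact hab.2
    · exact ih y hy

lemma step_of_argsNF {f : F} {ts' : List (Term F)}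
    (hargs : ∀ u ∈ ts', NormalForm R u) {v : Term F}
    (h : OneStep R (.app f ts') v) :
    ∃ ρ ∈ R, ∃ σ : Nat → Term F, Term.app f ts' = ρ.1.subst σ ∧ v = ρ.2.subst σ := by
  obtain ⟨ρ, hρ, σ, p, hsub, hrep⟩ := h
  cases p with
  | nil => exact ⟨ρ, hρ, σ, subtermAt_nil hsub, replaceAt_nil hrep⟩
  | cons i q =>
    obtain ⟨f', ts2, u, heq, hget, hsubu⟩ := subtermAt_cons hsub
    injection heq with h1 h2
    rw [← h2] at hget
    have hu : u ∈ ts' := List.mem_of_getElem? hget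
    obtain ⟨w, hw⟩ := replaceAt_exists hsubu (ρ.2.subst σ)
    exact absurd ⟨ρ, hρ, σ, q, hsubu, hw⟩ (hargs u hu w)

lemma epsIrr_of_argsNF {f : F} {ts' : List (Term F)}
    (hargs : ∀ u ∈ ts', NormalForm R u) : EpsIrreducible R (.app f ts') := by
  intro p u hsub hne
  cases p with
  | nil => exact absurd rfl hne
  | cons i q =>
    obtain ⟨f', ts2, u₀, heq, hget, hsubu⟩ := subtermAt_cons hsub
    injection heq with h1 h2
    rw [← h2] at hget
    exact normalForm_subterm (hargs u₀ (List.mem_of_getElem? hget)) hsubu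

lemma exists_nf (hT : Terminating R) (t : Term F) : ∃ u, NFof R t u := by
  refine hT.induction (C := fun t => ∃ u, NFof R t u) t ?_
  intro t IH
  by_cases h : ∃ v, OneStep R t v
  · obtain ⟨v, hv⟩ := h
    obtain ⟨u, hu1, hu2⟩ := IH v hv
    exact ⟨u, .head hv hu1, hu2⟩
  · exact ⟨t, .refl, fun v hv => h ⟨v, hv⟩⟩

lemma star_eq_of_nf {t u : Term F} (hnf : NormalForm R t) (h : StarRW R t u) :
    t = u := by
  rcases h.cases_head with rfl | ⟨c, hc, _⟩
  · rfl
  · exact absurd hc (hnf c)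

lemma nf_unique (hC : Confluent R) {s t₁ t₂ : Term F}
    (h1 : StarRW R s t₁) (h2 : StarRW R s t₂)
    (n1 : NormalForm R t₁) (n2 : NormalForm R t₂) : t₁ = t₂ := by
  obtain ⟨u, hu1, hu2⟩ := hC s t₁ t₂ h1 h2
  rw [star_eq_of_nf n1 hu1, star_eq_of_nf n2 hu2]

lemma isVar_var (n : Nat) : (Term.var n : Term F).IsVar := by
  rw [Term.IsVar]; trivial

lemma root_eq_of_subst {t : Term F} (hnv : ¬ t.IsVar) {δ : Nat → Term F} {f : F}
    {ts : List (Term F)} (h : t.subst δ = Term.app f ts) : t.root = some f := by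
  cases t with
  | var n => exact absurd (isVar_var n) hnv
  | app a b =>
    rw [Term.subst_app'] at h
    have : a = f := by injection h
    rw [this, Term.root]

lemma subst_root {t : Term F} {f : F} (h : t.root = some f) (δ : Nat → Term F) :
    (t.subst δ).root = some f := by
  cases t with
  | var n => rw [Term.root] at h; exact absurd h (by simp)
  | app a b => rw [Term.root] at h; rw [Term.subst_app', Term.root]; exact h

lemma le_foldr_max : ∀ (L : List Nat), ∀ x ∈ L, x ≤ L.foldr max 0 := by
  intro L
  induction L with
  | nil => simp
  | cons a L ih =>
    intro x hx
    rcases List.mem_cons.1 hx with rfl | hx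
    · exact le_max_left _ _
    · exact le_trans (ih x hx) (le_max_right _ _)

end Rewriting

/-- if `f(s₁,…,sₘ)` root-rewrites by `l → r` to `g(t₁,…,tₙ)`, then so do
the corresponding terms with normalized arguments, by the same rule. -/
theorem commuting_square {F : Type} (R : TRS F) (hlm : LMSystem R)
    (l r : Term F) (hrule : (l, r) ∈ R)
    (f g : F) (ss ts ss' ts' : List (Term F)) (σ : Nat → Term F)
    (h1 : Term.app f ss = l.subst σ) (h2 : Term.app g ts = r.subst σ)
    (hss : List.Forall₂ (NFof R) ss ss') (hts : List.Forall₂ (NFof R) ts ts') :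
    ∃ τ : Nat → Term F, Term.app f ss' = l.subst τ ∧ Term.app g ts' = r.subst τ := by
  obtain ⟨hconf, hterm⟩ := hlm.convergent
  have hQ1 := hlm.quasiDet.1
  have hQ2 := hlm.quasiDet.2.1
  have hQ3 := hlm.quasiDet.2.2
  have hlrmem : ((l, r) : Rule F) ∈ RHSset R := Or.inl hrule
  have hrootl : l.root = some f := root_eq_of_subst (hQ1 _ hlrmem).1 h1.symm
  have hrootr : r.root = some g := root_eq_of_subst (hQ1 _ hlrmem).2 h2.symm
  have hfg : f ≠ g := by
    intro hEq
    exact hQ2 _ hlrmem (by rw [hrootl, hrootr, hEq])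
  have hsNF : ∀ u ∈ ss', NormalForm R u := forall₂_nfof_nf hss
  have htNF : ∀ u ∈ ts', NormalForm R u := forall₂_nfof_nf hts
  have hs'star : StarRW R (Term.app f ss) (Term.app f ss') :=
    starRW_args (hss.imp fun _ _ hr => hr.1) f
  have ht'star : StarRW R (Term.app g ts) (Term.app g ts') :=
    starRW_args (hts.imp fun _ _ hr => hr.1) g
  have hstep : OneStep R (Term.app f ss) (Term.app g ts) := by
    refine ⟨(l, r), hrule, σ, [], ?_, ?_⟩
    · show SubtermAt _ [] (l.subst σ)
      rw [← h1]; exact .here _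
    · show ReplaceAt _ [] (r.subst σ) _
      rw [h2]; exact .here _ _
  have hreach_t' : StarRW R (Term.app f ss) (Term.app g ts') := .head hstep ht'star
  by_cases hs'nf : NormalForm R (Term.app f ss') <;>
    by_cases ht'nf : NormalForm R (Term.app g ts')
  · -- both in normal form: impossible since f ≠ g
    have heq := nf_unique hconf hs'star hreach_t' hs'nf ht'nf
    injection heq with hf _
    exact absurd hf hfg
  · -- s' in NF, t' reducible: impossible (crossed root pair)
    exfalso
    obtain ⟨w, hw1, hw2⟩ := hconf _ _ _ hreach_t' hs'star
    have hw : w = Term.app f ss' := (star_eq_of_nf hs'nf hw2).symm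
    subst hw
    have hstep' := hlm.forwardClosed _ ⟨epsIrr_of_argsNF htNF, ht'nf⟩ _ ⟨hw1, hs'nf⟩
    obtain ⟨⟨l₄, r₄⟩, hρ₄, δ, he1, he2⟩ := step_of_argsNF htNF hstep'
    have hmem₄ : ((l₄, r₄) : Rule F) ∈ RHSset R := Or.inl hρ₄
    have h4l : l₄.root = some g := root_eq_of_subst (hQ1 _ hmem₄).1 he1.symm
    have h4r : r₄.root = some f := root_eq_of_subst (hQ1 _ hmem₄).2 he2.symm
    have heqr : ((l₄, r₄) : Rule F) = (l, r) := by
      by_contra hne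
      exact hQ3 _ hmem₄ _ hlrmem hne
        (Or.inr ⟨by rw [h4l, hrootr], by rw [h4r, hrootl]⟩)
    have hl4 : l₄ = l := congrArg Prod.fst heqr
    rw [hl4, hrootl] at h4l
    injection h4l with h4l'
    exact hfg h4l'
  · -- s' reducible, t' in NF: the rule applies directly
    obtain ⟨w, hw1, hw2⟩ := hconf _ _ _ hs'star hreach_t'
    have hw : w = Term.app g ts' := (star_eq_of_nf ht'nf hw2).symm
    subst hw
    have hstep' := hlm.forwardClosed _ ⟨epsIrr_of_argsNF hsNF, hs'nf⟩ _ ⟨hw1, ht'nf⟩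
    obtain ⟨⟨l₃, r₃⟩, hρ₃, δ, he1, he2⟩ := step_of_argsNF hsNF hstep'
    have hmem₃ : ((l₃, r₃) : Rule F) ∈ RHSset R := Or.inl hρ₃
    have h3l : l₃.root = some f := root_eq_of_subst (hQ1 _ hmem₃).1 he1.symm
    have h3r : r₃.root = some g := root_eq_of_subst (hQ1 _ hmem₃).2 he2.symm
    have heqr : ((l₃, r₃) : Rule F) = (l, r) := by
      by_contra hne
      exact hQ3 _ hmem₃ _ hlrmem hne
        (Or.inl ⟨by rw [h3l, hrootl], by rw [h3r, hrootr]⟩)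
    have hc1 : l₃ = l := congrArg Prod.fst heqr
    have hc2 : r₃ = r := congrArg Prod.snd heqr
    exact ⟨δ, by rw [← hc1]; exact he1, by rw [← hc2]; exact he2⟩
  · -- both reducible: right-hand-side critical pair via RHSset quasi-determinism
    obtain ⟨n₁, hn₁s, hn₁f⟩ := exists_nf hterm (Term.app f ss')
    obtain ⟨n₂, hn₂s, hn₂f⟩ := exists_nf hterm (Term.app g ts')
    have h12 : n₁ = n₂ :=
      nf_unique hconf (hs'star.trans hn₁s) (hreach_t'.trans hn₂s) hn₁f hn₂f
    subst h12
    have hstep₃ := hlm.forwardClosed _ ⟨epsIrr_of_argsNF hsNF, hs'nf⟩ _ ⟨hn₁s, hn₁f⟩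
    have hstep₄ := hlm.forwardClosed _ ⟨epsIrr_of_argsNF htNF, ht'nf⟩ _ ⟨hn₂s, hn₁f⟩
    obtain ⟨⟨l₃, r₃⟩, hρ₃, δ₃, ha1, ha2⟩ := step_of_argsNF hsNF hstep₃
    obtain ⟨⟨l₄, r₄⟩, hρ₄, δ₄, hb1, hb2⟩ := step_of_argsNF htNF hstep₄
    set N : Nat := ((l₃.varsL ++ r₃.varsL).foldr max 0) + 1 with hN
    have hbound : ∀ x ∈ l₃.varsL ++ r₃.varsL, x < N := fun x hx =>
      Nat.lt_succ_of_le (le_foldr_max _ x hx)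
    set ρ : Nat → Term F := fun m => Term.var (m + N) with hρdef
    set θ : Nat → Term F := fun x => if x < N then δ₃ x else δ₄ (x - N) with hθdef
    have hθ₃ : ∀ a : Term F, (∀ x ∈ a.varsL, x < N) → a.subst θ = a.subst δ₃ := by
      intro a ha
      refine Term.subst_congr_vars fun x hx => ?_
      rw [hθdef]
      exact if_pos (ha x hx)
    have hρθ : ∀ a : Term F, (a.subst ρ).subst θ = a.subst δ₄ := by
      intro a
      rw [Term.subst_subst]
      refine Term.subst_congr_vars fun m _ => ?_
      rw [hρdef]
      show (Term.var (m + N)).subst θ = δ₄ m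
      rw [Term.subst_var', hθdef]
      show (if m + N < N then δ₃ (m + N) else δ₄ (m + N - N)) = δ₄ m
      rw [if_neg (by omega : ¬ (m + N < N))]
      congr 1
      omega
    have hUL : UL θ [(r₃, r₄.subst ρ)] := by
      intro p hp
      simp only [List.mem_singleton] at hp
      subst hp
      show r₃.subst θ = (r₄.subst ρ).subst θ
      rw [hθ₃ r₃ (fun x hx => hbound x (List.mem_append.2 (Or.inr hx))), hρθ,
        ← ha2, ← hb2]
    obtain ⟨σ₀, hσ₀u, hσ₀m⟩ := unify_exists _ ⟨θ, hUL⟩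
    have hmgu : IsMGU σ₀ r₃ (r₄.subst ρ) :=
      ⟨hσ₀u _ (List.mem_singleton.2 rfl), fun τ hτ => hσ₀m τ (by
        intro p hp
        simp only [List.mem_singleton] at hp
        subst hp
        exact hτ)⟩
    obtain ⟨δ', hδ'⟩ := hσ₀m θ hUL
    have hfact : ∀ a : Term F, a.subst θ = (a.subst σ₀).subst δ' := by
      intro a
      rw [Term.subst_subst]
      exact Term.subst_congr_vars fun x _ => hδ' x
    have hl₃θ : l₃.subst θ = Term.app f ss' := by
      rw [hθ₃ l₃ (fun x hx => hbound x (List.mem_append.2 (Or.inl hx))), ← ha1]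
    have hl₄θ : (l₄.subst ρ).subst θ = Term.app g ts' := by rw [hρθ, ← hb1]
    have hneq : l₃.subst σ₀ ≠ (l₄.subst ρ).subst σ₀ := by
      intro hEq
      have hbad : Term.app f ss' = Term.app g ts' := by
        rw [← hl₃θ, ← hl₄θ, hfact l₃, hfact (l₄.subst ρ), hEq]
      injection hbad with hf _
      exact hfg hf
    have hren : IsRenaming ρ := ⟨fun m => m + N, add_left_injective N, fun m => rfl⟩
    have hemem : ((l₃.subst σ₀, (l₄.subst ρ).subst σ₀) : Rule F) ∈ RHSset R :=
      Or.inr ⟨l₃, r₃, l₄, r₄, ρ, σ₀, hρ₃, hρ₄, hren, hmgu, hneq, rfl⟩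
    have hmem₃ : ((l₃, r₃) : Rule F) ∈ RHSset R := Or.inl hρ₃
    have hmem₄ : ((l₄, r₄) : Rule F) ∈ RHSset R := Or.inl hρ₄
    have h3l : l₃.root = some f := root_eq_of_subst (hQ1 _ hmem₃).1 ha1.symm
    have h4l : l₄.root = some g := root_eq_of_subst (hQ1 _ hmem₄).1 hb1.symm
    have hroote1 : (l₃.subst σ₀).root = some f := subst_root h3l σ₀
    have hroote2 : ((l₄.subst ρ).subst σ₀).root = some g :=
      subst_root (subst_root h4l ρ) σ₀
    have heqr : ((l₃.subst σ₀, (l₄.subst ρ).subst σ₀) : Rule F) = (l, r) := by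
      by_contra hne
      exact hQ3 _ hemem _ hlrmem hne
        (Or.inl ⟨by rw [hroote1, hrootl], by rw [hroote2, hrootr]⟩)
    have hc1 : l₃.subst σ₀ = l := congrArg Prod.fst heqr
    have hc2 : (l₄.subst ρ).subst σ₀ = r := congrArg Prod.snd heqr
    refine ⟨δ', ?_, ?_⟩
    · rw [← hc1, ← hfact l₃, hl₃θ]
    · rw [← hc2, ← hfact (l₄.subst ρ), hl₄θ]
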